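/- Let (i_1,…,i_N) be a reduced word for the longest element w0 of S_n, and order the inversion set I(w0) = {(p,q) : 1 ≤ p < q ≤ n} by (p_1,q_1) < (p_2,q_2) < … < (p_N,q_N), where p_j = σ_{i_1}⋯σ_{i_{j−1}}(i_j) and q_j = σ_{i_1}⋯σ_{i_{j−1}}(i_j+1). Then this total order is a reflection ordering: for every triple p < q < r, either (p,q) < (p,r) < (q,r) or (q,r) < (p,r) < (p,q). -/

import Mathlib

private lemma swapLt {n : ℕ} {c s x y : Fin n} (hcs : (s:ℕ) = (c:ℕ) + 1) (hxy : x < y)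
    (hne : ¬(x = c ∧ y = s)) : Equiv.swap c s x < Equiv.swap c s y := by
  simp only [Equiv.swap_apply_def]
  simp only [Fin.ext_iff, Fin.lt_def] at *
  split_ifs <;> omega

private lemma existsFlip (P : ℕ → Prop) : ∀ n, P 0 → ¬ P n → ∃ t, t < n ∧ P t ∧ ¬ P (t+1) := by
  intro n
  induction n with
  | zero => intro h0 hn; exact absurd h0 hn
  | succ n IH =>
    intro h0 hn
    by_cases h : P n
    · exact ⟨n, Nat.lt_succ_self n, h, hn⟩
    · obtain ⟨t, ht, h1, h2⟩ := IH h0 h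
      exact ⟨t, Nat.lt_succ_of_lt ht, h1, h2⟩

/-- Let `(i_1,…,i_N)` be a reduced word for the longest element `w0` of `S_n`
(here `n = m+1`, `N = n(n−1)/2`), and order the inversion set of `w0` by the
positions `j ↦ (p_j, q_j)` with `p_j = σ_{i_1}⋯σ_{i_{j−1}}(i_j)` and
`q_j = σ_{i_1}⋯σ_{i_{j−1}}(i_j+1)`.  This total order is a reflection ordering:
for every triple `p < q < r`, either `(p,q) < (p,r) < (q,r)` or
`(q,r) < (p,r) < (p,q)`. -/
theorem stmt_2 (m : ℕ) (N : ℕ) (hN : N = (m + 1) * m / 2)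
    (w0 : Equiv.Perm (Fin (m + 1))) (hw0 : ∀ x, w0 x = x.rev)
    (i : Fin N → Fin m)
    (hw : (List.ofFn fun j : Fin N => Equiv.swap (i j).castSucc (i j).succ).prod = w0) :
    ∀ (j₁ j₂ j₃ : Fin N) (p q r : Fin (m + 1)), p < q → q < r →
      (((List.ofFn fun t : Fin N => Equiv.swap (i t).castSucc (i t).succ).take j₁).prod
          (i j₁).castSucc = p ∧
       ((List.ofFn fun t : Fin N => Equiv.swap (i t).castSucc (i t).succ).take j₁).prod
          (i j₁).succ = q) →
      (((List.ofFn fun t : Fin N => Equiv.swap (i t).castSucc (i t).succ).take j₂).prod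
          (i j₂).castSucc = p ∧
       ((List.ofFn fun t : Fin N => Equiv.swap (i t).castSucc (i t).succ).take j₂).prod
          (i j₂).succ = r) →
      (((List.ofFn fun t : Fin N => Equiv.swap (i t).castSucc (i t).succ).take j₃).prod
          (i j₃).castSucc = q ∧
       ((List.ofFn fun t : Fin N => Equiv.swap (i t).castSucc (i t).succ).take j₃).prod
          (i j₃).succ = r) →
      (j₁ < j₂ ∧ j₂ < j₃) ∨ (j₃ < j₂ ∧ j₂ < j₁) := by
  intro j₁ j₂ j₃ p q r hpq hqr h1 h2 h3
  set L : List (Equiv.Perm (Fin (m+1))) :=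
    List.ofFn fun t : Fin N => Equiv.swap (i t).castSucc (i t).succ with hL
  have hLlen : L.length = N := by simp [hL]
  set g : ℕ → Equiv.Perm (Fin (m+1)) := fun t => (L.take t).prod with hg
  have hgdef : ∀ t : ℕ, (L.take t).prod = g t := fun _ => rfl
  rw [hgdef] at h1 h2 h3
  -- step lemma
  have hstep : ∀ (t : ℕ) (ht : t < N),
      g (t+1) = g t * Equiv.swap (i ⟨t,ht⟩).castSucc (i ⟨t,ht⟩).succ := by
    intro t ht
    have ht' : t < L.length := by rw [hLlen]; exact ht
    simp only [hg]
    rw [List.prod_take_succ L t ht']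
    congr 1
    simp [hL]
  have hflipinv : ∀ (t : ℕ) (ht : t < N),
      (g (t+1))⁻¹ = Equiv.swap (i ⟨t,ht⟩).castSucc (i ⟨t,ht⟩).succ * (g t)⁻¹ := by
    intro t ht
    rw [hstep t ht, mul_inv_rev, Equiv.swap_inv]
  have hcs : ∀ k : Fin m, (k.succ : ℕ) = (k.castSucc : ℕ) + 1 := by
    intro k; simp
  -- keep lemma
  have hkeep : ∀ (t : ℕ) (ht : t < N) (a b : Fin (m+1)),
      s(a,b) ≠ s(g t (i ⟨t,ht⟩).castSucc, g t (i ⟨t,ht⟩).succ) →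
      ((g (t+1))⁻¹ a < (g (t+1))⁻¹ b ↔ (g t)⁻¹ a < (g t)⁻¹ b) := by
    intro t ht a b hne
    rw [hflipinv t ht]
    simp only [Equiv.Perm.mul_apply]
    have h1' : ¬((g t)⁻¹ a = (i ⟨t,ht⟩).castSucc ∧ (g t)⁻¹ b = (i ⟨t,ht⟩).succ) := by
      rintro ⟨ha, hb⟩
      apply hne
      rw [Sym2.eq_iff]
      left
      constructor
      · rw [← ha]; simp
      · rw [← hb]; simp
    have h2' : ¬((g t)⁻¹ a = (i ⟨t,ht⟩).succ ∧ (g t)⁻¹ b = (i ⟨t,ht⟩).castSucc) := by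
      rintro ⟨ha, hb⟩
      apply hne
      rw [Sym2.eq_iff]
      right
      constructor
      · rw [← ha]; simp
      · rw [← hb]; simp
    constructor
    · intro h
      by_contra hc
      rcases (not_lt.mp hc).lt_or_eq with h'|h'
      · have := swapLt (hcs (i ⟨t,ht⟩)) h' (fun ⟨hb, ha⟩ => h2' ⟨ha, hb⟩)
        exact absurd h (not_lt.mpr this.le)
      · rw [h'] at h; exact lt_irrefl _ h
    · intro h
      exact swapLt (hcs (i ⟨t,ht⟩)) h h1'
  -- flip values
  have hPQ : ∀ (t : ℕ) (ht : t < N),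
      (g (t+1))⁻¹ (g t (i ⟨t,ht⟩).castSucc) = (i ⟨t,ht⟩).succ ∧
      (g (t+1))⁻¹ (g t (i ⟨t,ht⟩).succ) = (i ⟨t,ht⟩).castSucc := by
    intro t ht
    rw [hflipinv t ht]
    simp
  -- start and end
  have h0 : ∀ a b : Fin (m+1), a < b → (g 0)⁻¹ a < (g 0)⁻¹ b := by
    simp [hg]
  have hgN : g N = w0 := by
    simp only [hg]
    rw [List.take_of_length_le (le_of_eq hLlen), hw]
  have hEnd : ∀ a b : Fin (m+1), a < b → ¬ ((g N)⁻¹ a < (g N)⁻¹ b) := by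
    intro a b h
    have hinv : ∀ x : Fin (m+1), (g N)⁻¹ x = x.rev := by
      intro x
      rw [hgN]
      have hx : w0 x.rev = x := by rw [hw0]; exact Fin.rev_rev x
      conv_lhs => rw [← hx]
      exact Equiv.symm_apply_apply _ _
    rw [hinv, hinv]
    exact not_lt.mpr (Fin.rev_lt_rev.mpr h).le
  -- the labelling map
  have hPneQ : ∀ t : Fin N, g t (i t).castSucc ≠ g t (i t).succ :=
    fun t => (Equiv.injective _).ne (Fin.castSucc_lt_succ (i := i t)).ne
  let f : Fin N → {z : Sym2 (Fin (m+1)) // ¬ z.IsDiag} :=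
    fun t => ⟨s(g t (i t).castSucc, g t (i t).succ), by
      rw [Sym2.mk_isDiag_iff]; exact hPneQ t⟩
  -- crossing existence
  have hkey : ∀ a b : Fin (m+1), a < b →
      ∃ t : Fin N, s(a, b) = s(g t (i t).castSucc, g t (i t).succ) := by
    intro a b hab
    obtain ⟨t, htN, hP, hnP⟩ := existsFlip (fun t => (g t)⁻¹ a < (g t)⁻¹ b) N
      (h0 a b hab) (hEnd a b hab)
    refine ⟨⟨t, htN⟩, ?_⟩
    by_contra hne
    exact hnP ((hkeep t htN a b hne).mpr hP)
  have hsurj : Function.Surjective f := by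
    rintro ⟨z, hz⟩
    induction z using Sym2.ind with
    | _ a b =>
      rw [Sym2.mk_isDiag_iff] at hz
      rcases lt_or_gt_of_ne hz with hab | hab
      · obtain ⟨t, ht⟩ := hkey a b hab
        exact ⟨t, Subtype.ext ht.symm⟩
      · obtain ⟨t, ht⟩ := hkey b a hab
        refine ⟨t, Subtype.ext ?_⟩
        show s(g ↑t (i t).castSucc, g ↑t (i t).succ) = s(a, b)
        rw [← ht]
        exact Sym2.eq_swap
  have hinj : Function.Injective f := by
    have hcard : Fintype.card (Fin N) =
        Fintype.card {z : Sym2 (Fin (m+1)) // ¬ z.IsDiag} := by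
      rw [Fintype.card_fin, Sym2.card_subtype_not_diag, Fintype.card_fin,
        Nat.choose_two_right, hN]
      simp
    exact ((Fintype.bijective_iff_surjective_and_card f).mpr ⟨hsurj, hcard⟩).1
  -- monotone crossing lemma
  have hmono : ∀ (j : Fin N) (a b : Fin (m+1)), a < b →
      s(a,b) = s(g j (i j).castSucc, g j (i j).succ) →
      ∀ t : ℕ, t ≤ N → ((g t)⁻¹ a < (g t)⁻¹ b ↔ t ≤ (j:ℕ)) := by
    intro j a b hab hj t
    induction t with
    | zero =>
      intro _
      exact iff_of_true (h0 a b hab) (Nat.zero_le _)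
    | succ t IH =>
      intro htN
      have htN' : t < N := htN
      by_cases hcase : s(a,b) = s(g t (i ⟨t,htN'⟩).castSucc, g t (i ⟨t,htN'⟩).succ)
      · have htj : (⟨t, htN'⟩ : Fin N) = j := by
          apply hinj
          apply Subtype.ext
          show s(g t (i ⟨t,htN'⟩).castSucc, g t (i ⟨t,htN'⟩).succ) =
            s(g (j:ℕ) (i j).castSucc, g (j:ℕ) (i j).succ)
          rw [← hcase, ← hj]
        have htjv : t = (j : ℕ) := by rw [← htj]
        have hIH : (g t)⁻¹ a < (g t)⁻¹ b := (IH (le_of_lt htN')).mpr (le_of_eq htjv)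
        rcases Sym2.eq_iff.mp hcase with ⟨ha, hb⟩ | ⟨ha, hb⟩
        · have hA : (g (t+1))⁻¹ a = (i ⟨t,htN'⟩).succ := by rw [ha]; exact (hPQ t htN').1
          have hB : (g (t+1))⁻¹ b = (i ⟨t,htN'⟩).castSucc := by rw [hb]; exact (hPQ t htN').2
          rw [hA, hB]
          constructor
          · intro hlt
            exact absurd hlt (not_lt.mpr (Fin.castSucc_lt_succ).le)
          · intro hle; omega
        · exfalso
          have hA : (g t)⁻¹ a = (i ⟨t,htN'⟩).succ := by
            rw [ha]; exact Equiv.symm_apply_apply _ _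
          have hB : (g t)⁻¹ b = (i ⟨t,htN'⟩).castSucc := by
            rw [hb]; exact Equiv.symm_apply_apply _ _
          rw [hA, hB] at hIH
          exact absurd hIH (not_lt.mpr (Fin.castSucc_lt_succ).le)
      · have hne : t ≠ (j : ℕ) := by
          intro h
          apply hcase
          have h' : (⟨t, htN'⟩ : Fin N) = j := Fin.ext h
          rw [h', h]
          exact hj
        rw [hkeep t htN' a b hcase, IH (le_of_lt htN')]
        omega
  -- apply to our three pairs
  have hj1 : s(p,q) = s(g j₁ (i j₁).castSucc, g j₁ (i j₁).succ) := by
    rw [h1.1, h1.2]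
  have hj2 : s(p,r) = s(g j₂ (i j₂).castSucc, g j₂ (i j₂).succ) := by
    rw [h2.1, h2.2]
  have hj3 : s(q,r) = s(g j₃ (i j₃).castSucc, g j₃ (i j₃).succ) := by
    rw [h3.1, h3.2]
  have hpr : p < r := hpq.trans hqr
  have hposp : (g j₂)⁻¹ p = (i j₂).castSucc := by
    rw [← h2.1]; exact Equiv.symm_apply_apply _ _
  have hposr : (g j₂)⁻¹ r = (i j₂).succ := by
    rw [← h2.2]; exact Equiv.symm_apply_apply _ _
  have hqnec : (g j₂)⁻¹ q ≠ (i j₂).castSucc := by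
    rw [← hposp]
    exact fun h => absurd (Equiv.injective _ h) hpq.ne'
  have hqnes : (g j₂)⁻¹ q ≠ (i j₂).succ := by
    rw [← hposr]
    exact fun h => absurd (Equiv.injective _ h) hqr.ne
  have hj2N : (j₂ : ℕ) ≤ N := j₂.isLt.le
  have hj12 : j₁ ≠ j₂ := by
    intro h
    rw [h, ← hj2] at hj1
    rcases Sym2.eq_iff.mp hj1 with ⟨_, hb⟩ | ⟨ha, _⟩
    · exact absurd hb hqr.ne
    · exact absurd ha (hpq.trans hqr).ne
  have hj23 : j₂ ≠ j₃ := by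
    intro h
    rw [h, ← hj3] at hj2
    rcases Sym2.eq_iff.mp hj2 with ⟨ha, _⟩ | ⟨_, hb⟩
    · exact absurd ha hpq.ne
    · exact absurd hb hqr.ne'
  have hqcases : ((g j₂)⁻¹ q : ℕ) < ((i j₂).castSucc : ℕ) ∨
      ((i j₂).succ : ℕ) < ((g j₂)⁻¹ q : ℕ) := by
    have e1 : ((g j₂)⁻¹ q : ℕ) ≠ ((i j₂).castSucc : ℕ) := fun h => hqnec (Fin.ext h)
    have e2 : ((g j₂)⁻¹ q : ℕ) ≠ ((i j₂).succ : ℕ) := fun h => hqnes (Fin.ext h)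
    have := hcs (i j₂)
    omega
  rcases hqcases with hA | hB
  · -- q left of p and r at time j₂ : j₁ < j₂ < j₃
    left
    have hnp : ¬ ((g (j₂:ℕ))⁻¹ p < (g (j₂:ℕ))⁻¹ q) := by
      rw [hposp]
      rw [Fin.lt_def]
      omega
    have hlt1 : ¬ ((j₂:ℕ) ≤ (j₁:ℕ)) := fun h =>
      hnp ((hmono j₁ p q hpq hj1 (j₂:ℕ) hj2N).mpr h)
    have hqr' : (g (j₂:ℕ))⁻¹ q < (g (j₂:ℕ))⁻¹ r := by
      rw [hposr, Fin.lt_def]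
      have := hcs (i j₂)
      omega
    have hle3 : (j₂:ℕ) ≤ (j₃:ℕ) := (hmono j₃ q r hqr hj3 (j₂:ℕ) hj2N).mp hqr'
    constructor
    · exact Fin.lt_def.mpr (by omega)
    · exact Fin.lt_def.mpr (lt_of_le_of_ne hle3 (fun h => hj23 (Fin.ext h)))
  · -- q right of p and r : j₃ < j₂ < j₁
    right
    have hp : (g (j₂:ℕ))⁻¹ p < (g (j₂:ℕ))⁻¹ q := by
      rw [hposp, Fin.lt_def]
      have := hcs (i j₂)
      omega
    have hle1 : (j₂:ℕ) ≤ (j₁:ℕ) := (hmono j₁ p q hpq hj1 (j₂:ℕ) hj2N).mp hp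
    have hnq : ¬ ((g (j₂:ℕ))⁻¹ q < (g (j₂:ℕ))⁻¹ r) := by
      rw [hposr, Fin.lt_def]
      omega
    have hlt3 : ¬ ((j₂:ℕ) ≤ (j₃:ℕ)) := fun h =>
      hnq ((hmono j₃ q r hqr hj3 (j₂:ℕ) hj2N).mpr h)
    constructor
    · exact Fin.lt_def.mpr (by omega)
    · exact Fin.lt_def.mpr (lt_of_le_of_ne hle1 (fun h => hj12 (Fin.ext h.symm)))
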